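/- For an infinite-dimensional Hilbert space E, the set {E(W)* e : W ∈ B_N(E), e ∈ E} is total in ⊕_{σ ∈ F_N^+} E; equivalently, if a vector x = (x_σ)_σ satisfies Σ_σ W_σ x_σ = 0 (i.e. E(W)x = 0) for all W ∈ B_N(E), then x = 0. -/
import Mathlib

noncomputable section
abbrev FM (N : ℕ) := FreeMonoid (Fin N)
namespace NCSzego
variable {N : ℕ} {E : Type*} [NormedAddCommGroup E] [InnerProductSpace ℂ E] [CompleteSpace E]

/-- The word product `Z_σ = Z_{i_1} ⋯ Z_{i_k}` for `σ = i_1 ⋯ i_k`. -/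
def opWord (Z : Fin N → E →L[ℂ] E) (σ : FM N) : E →L[ℂ] E :=
  ((FreeMonoid.toList σ).map Z).prod

/-- Membership in the open operator `N`-ball: `(Z | Z) = Σ_k Z_k Z_k* < I`. -/
def InBall (Z : Fin N → E →L[ℂ] E) : Prop :=
  ∃ r : ℝ, r < 1 ∧ ∀ x : E, ∑ k : Fin N, ‖ContinuousLinearMap.adjoint (Z k) x‖ ^ 2 ≤ r * ‖x‖ ^ 2

/-- Evaluation of a noncommutative polynomial `P = Σ_σ c_σ X_σ` at an operator tuple. -/
def evalOp (Z : Fin N → E →L[ℂ] E) (P : FM N →₀ ℂ) : E →L[ℂ] E :=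
  P.sum fun σ c => c • opWord Z σ
open scoped InnerProductSpace

/-- Truncated shift operators along the word `L` w.r.t. the orthonormal family `f`. -/
def shiftOp (L : List (Fin N)) (f : ℕ → E) (r : ℝ) (k : Fin N) : E →L[ℂ] E :=
  (r : ℂ) • ∑ j : Fin L.length,
    if L.get j = k then (innerSL ℂ (f (j + 1))).smulRight (f j) else 0

lemma shiftOp_norm_le (L : List (Fin N)) (f : ℕ → E) (r : ℝ) (k : Fin N)
    (hf : ∀ i, ‖f i‖ ≤ 1) : ‖shiftOp L f r k‖ ≤ |r| * L.length := by
  rw [shiftOp, norm_smul]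
  have h1 : ‖(r : ℂ)‖ = |r| := by rw [Complex.norm_real, Real.norm_eq_abs]
  rw [h1]
  refine mul_le_mul_of_nonneg_left ?_ (abs_nonneg r)
  calc ‖∑ j : Fin L.length, if L.get j = k then (innerSL ℂ (f (j + 1))).smulRight (f j) else 0‖
      ≤ ∑ j : Fin L.length, ‖if L.get j = k then (innerSL ℂ (f (j + 1))).smulRight (f j) else 0‖ :=
        norm_sum_le _ _
    _ ≤ ∑ _j : Fin L.length, (1 : ℝ) := by
        refine Finset.sum_le_sum fun j _ => ?_
        by_cases hk : L.get j = k
        · rw [if_pos hk, ContinuousLinearMap.norm_smulRight_apply, innerSL_apply_norm]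
          exact mul_le_one₀ (hf _) (norm_nonneg _) (hf _)
        · rw [if_neg hk]; simp
    _ = L.length := by simp
lemma inBall_of_norm_le {W : Fin N → E →L[ℂ] E} {b : ℝ} (hb0 : 0 ≤ b)
    (hb : ∀ k, ‖W k‖ ≤ b) (hsmall : (N : ℝ) * b ^ 2 < 1) : InBall W := by
  refine ⟨(N : ℝ) * b ^ 2, hsmall, fun y => ?_⟩
  have : ∀ k : Fin N, ‖ContinuousLinearMap.adjoint (W k) y‖ ^ 2 ≤ b ^ 2 * ‖y‖ ^ 2 := by
    intro k
    have h1 : ‖ContinuousLinearMap.adjoint (W k) y‖ ≤ b * ‖y‖ := by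
      calc ‖ContinuousLinearMap.adjoint (W k) y‖
          ≤ ‖ContinuousLinearMap.adjoint (W k)‖ * ‖y‖ := (ContinuousLinearMap.adjoint (W k)).le_opNorm y
        _ = ‖W k‖ * ‖y‖ := by rw [LinearIsometryEquiv.norm_map ContinuousLinearMap.adjoint]
        _ ≤ b * ‖y‖ := by gcongr; exact hb k
    calc ‖ContinuousLinearMap.adjoint (W k) y‖ ^ 2 ≤ (b * ‖y‖) ^ 2 := by
          exact pow_le_pow_left₀ (norm_nonneg _) h1 2
      _ = b ^ 2 * ‖y‖ ^ 2 := by ring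
  calc ∑ k : Fin N, ‖ContinuousLinearMap.adjoint (W k) y‖ ^ 2
      ≤ ∑ _k : Fin N, b ^ 2 * ‖y‖ ^ 2 := Finset.sum_le_sum fun k _ => this k
    _ = (N : ℝ) * b ^ 2 * ‖y‖ ^ 2 := by simp [mul_assoc]

lemma pairing (L : List (Fin N)) (f : ℕ → E)
    (hf : ∀ i ≤ L.length, ∀ j ≤ L.length, ⟪f i, f j⟫_ℂ = if i = j then 1 else 0)
    (r : ℝ) (l : List (Fin N)) (p : ℕ) (hp : p ≤ L.length) (v : E) :
    ⟪f p, opWord (shiftOp L f r) (FreeMonoid.ofList l) v⟫_ℂ =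
      if l <+: L.drop p then (r : ℂ) ^ l.length * ⟪f (p + l.length), v⟫_ℂ else 0 := by
  induction l generalizing p with
  | nil =>
    simp [opWord, FreeMonoid.toList_ofList, List.nil_prefix]
  | cons k l ih =>
    have hstep : opWord (shiftOp L f r) (FreeMonoid.ofList (k :: l)) v
        = shiftOp L f r k (opWord (shiftOp L f r) (FreeMonoid.ofList l) v) := rfl
    rw [hstep]
    set u := opWord (shiftOp L f r) (FreeMonoid.ofList l) v with hu
    have hWk : ⟪f p, shiftOp L f r k u⟫_ℂ =
        if hq : p < L.length then
          (if L.get ⟨p, hq⟩ = k then (r : ℂ) * ⟪f (p + 1), u⟫_ℂ else 0) else 0 := by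
      rw [shiftOp]
      simp only [ContinuousLinearMap.smul_apply, ContinuousLinearMap.coe_sum',
        Finset.sum_apply, inner_smul_right, inner_sum]
      have hterm : ∀ j : Fin L.length,
          ⟪f p, (if L.get j = k then (innerSL ℂ (f ((j : ℕ) + 1))).smulRight (f j) else 0) u⟫_ℂ
          = if p = (j : ℕ) ∧ L.get j = k then ⟪f ((j : ℕ) + 1), u⟫_ℂ else 0 := by
        intro j
        by_cases hk : L.get j = k
        · rw [if_pos hk]
          simp only [ContinuousLinearMap.smulRight_apply, innerSL_apply_apply, inner_smul_right]
          rw [hf p hp (j : ℕ) j.isLt.le, mul_comm]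
          by_cases hj : p = (j : ℕ)
          · rw [if_pos hj, if_pos ⟨hj, hk⟩, one_mul]
          · rw [if_neg hj, if_neg (by tauto), zero_mul]
        · rw [if_neg hk, if_neg (by tauto)]
          simp
      rw [Finset.sum_congr rfl fun j _ => hterm j]
      by_cases hq : p < L.length
      · rw [dif_pos hq]
        rw [Finset.sum_eq_single (⟨p, hq⟩ : Fin L.length)]
        · by_cases hk : L.get ⟨p, hq⟩ = k
          · rw [if_pos ⟨rfl, hk⟩, if_pos hk]
          · rw [if_neg (by tauto), if_neg hk, mul_zero]
        · intro j _ hj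
          rw [if_neg]
          rintro ⟨hj2, -⟩
          exact hj (Fin.ext hj2.symm)
        · intro hmem; exact absurd (Finset.mem_univ _) hmem
      · rw [dif_neg hq]
        rw [Finset.sum_eq_zero, mul_zero]
        intro j _
        rw [if_neg]
        rintro ⟨hj2, -⟩
        omega
    rw [hWk]
    by_cases hq : p < L.length
    · rw [dif_pos hq]
      have hdrop : L.drop p = L.get ⟨p, hq⟩ :: L.drop (p + 1) := by
        rw [List.drop_eq_getElem_cons hq, List.get_eq_getElem]
      by_cases hk : L.get ⟨p, hq⟩ = k
      · rw [if_pos hk, ih (p + 1) hq]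
        rw [hdrop, hk]
        by_cases hpre : l <+: L.drop (p + 1)
        · rw [if_pos hpre, if_pos (List.cons_prefix_cons.2 ⟨rfl, hpre⟩)]
          have : p + (k :: l).length = p + 1 + l.length := by simp; omega
          rw [this, List.length_cons, pow_succ]
          ring
        · rw [if_neg hpre, if_neg, mul_zero]
          rw [List.cons_prefix_cons]
          tauto
      · rw [if_neg hk, if_neg]
        rw [hdrop, List.cons_prefix_cons]
        rintro ⟨h1, -⟩
        exact hk h1.symm
    · rw [dif_neg hq, if_neg]
      rw [List.drop_eq_nil_of_le (by omega)]
      simp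

lemma exists_unit_orthogonal (h : ¬ FiniteDimensional ℂ E) {n : ℕ} (f : Fin n → E) :
    ∃ v : E, ‖v‖ = 1 ∧ ∀ i, ⟪f i, v⟫_ℂ = 0 := by
  set K : Submodule ℂ E := Submodule.span ℂ (Set.range f)
  have hK : FiniteDimensional ℂ K := FiniteDimensional.span_of_finite ℂ (Set.finite_range f)
  have hbot : Kᗮ ≠ ⊥ := by
    intro hb
    rw [Submodule.orthogonal_eq_bot_iff] at hb
    exact h (Module.Finite.equiv (LinearEquiv.ofTop K hb))
  obtain ⟨w, hwK, hw0⟩ := Submodule.exists_mem_ne_zero_of_ne_bot hbot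
  refine ⟨(‖w‖ : ℂ)⁻¹ • w, ?_, fun i => ?_⟩
  · rw [norm_smul]
    simp [norm_ne_zero_iff.2 hw0]
  · have : ⟪f i, w⟫_ℂ = 0 := by
      have := (Submodule.mem_orthogonal K w).1 hwK (f i) (Submodule.subset_span ⟨i, rfl⟩)
      simpa using this
    rw [inner_smul_right, this, mul_zero]

lemma exists_orthonormal_ext (h : ¬ FiniteDimensional ℂ E) (e : E) (he : ‖e‖ = 1) :
    ∀ n : ℕ, ∃ g : Fin (n + 1) → E, Orthonormal ℂ g ∧ g 0 = e := by
  intro n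
  induction n with
  | zero =>
    refine ⟨fun _ => e, ?_, rfl⟩
    rw [orthonormal_iff_ite]
    intro i j
    fin_cases i; fin_cases j
    simp [inner_self_eq_norm_sq_to_K, he]
  | succ n ih =>
    obtain ⟨g, hg, hg0⟩ := ih
    obtain ⟨v, hv1, hvo⟩ := exists_unit_orthogonal h g
    refine ⟨Fin.snoc g v, ?_, ?_⟩
    · rw [orthonormal_iff_ite]
      intro i j
      induction i using Fin.lastCases with
      | last =>
        induction j using Fin.lastCases with
        | last => simp [inner_self_eq_norm_sq_to_K, hv1]
        | cast j =>
          rw [Fin.snoc_last, Fin.snoc_castSucc, if_neg (by simp [Fin.ext_iff]; omega),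
            ← inner_conj_symm, hvo j, map_zero]
      | cast i =>
        induction j using Fin.lastCases with
        | last =>
          rw [Fin.snoc_last, Fin.snoc_castSucc, hvo i, if_neg (by simp [Fin.ext_iff]; omega)]
        | cast j =>
          rw [Fin.snoc_castSucc, Fin.snoc_castSucc, orthonormal_iff_ite.1 hg i j]
          simp [Fin.castSucc_inj]
    · rw [show (0 : Fin (n + 1 + 1)) = Fin.castSucc 0 from rfl, Fin.snoc_castSucc, hg0]

lemma exists_family (h : ¬ FiniteDimensional ℂ E) (e : E) (he : ‖e‖ = 1) (m : ℕ) :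
    ∃ f : ℕ → E, f m = e ∧ (∀ i, ‖f i‖ ≤ 1) ∧
      (∀ i ≤ m, ∀ j ≤ m, ⟪f i, f j⟫_ℂ = if i = j then 1 else 0) := by
  obtain ⟨g, hg, hg0⟩ := exists_orthonormal_ext h e he m
  refine ⟨fun n => if hn : n ≤ m then g ⟨m - n, by omega⟩ else 0, ?_, ?_, ?_⟩
  · simp only
    rw [dif_pos le_rfl]
    have : (⟨m - m, by omega⟩ : Fin (m + 1)) = 0 := by ext; simp
    rw [this, hg0]
  · intro i
    simp only
    by_cases hi : i ≤ m
    · rw [dif_pos hi]; exact le_of_eq (hg.1 _)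
    · rw [dif_neg hi]; simp
  · intro i hi j hj
    simp only
    rw [dif_pos hi, dif_pos hj, orthonormal_iff_ite.1 hg]
    by_cases hij : i = j
    · subst hij; simp
    · rw [if_neg (by intro hc; exact hij (by have := Fin.mk.injEq .. ▸ hc; omega)), if_neg hij]

lemma inner_apply_eq_zero (h : ¬ FiniteDimensional ℂ E)
    (x : lp (fun _ : FM N => E) 2)
    (hx : ∀ W : Fin N → E →L[ℂ] E, InBall W →
      HasSum (fun σ : FM N => opWord W σ (x σ)) 0)
    (μ : FM N) (e : E) (he : ‖e‖ = 1) : ⟪e, x μ⟫_ℂ = 0 := by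
  classical
  set L : List (Fin N) := FreeMonoid.toList μ with hL
  set m := L.length with hm
  obtain ⟨f, hfm, hf1, hfo⟩ := exists_family h e he m
  set r0 : ℝ := (1 + (N : ℝ) * m)⁻¹ with hr0
  have hr0pos : 0 < r0 := by positivity
  set c : ℕ → ℂ := fun n => ⟪f n, x (FreeMonoid.ofList (L.take n))⟫_ℂ with hc
  have key : ∀ r ∈ Set.Ioo (0 : ℝ) r0,
      ∑ n ∈ Finset.range (m + 1), (r : ℂ) ^ n * c n = 0 := by
    intro r hr
    have hrpos := hr.1
    have hball : InBall (shiftOp L f r) := by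
      refine inBall_of_norm_le (b := |r| * m) (by positivity)
        (fun k => shiftOp_norm_le L f r k hf1) ?_
      have hpos : (0 : ℝ) < 1 + (N : ℝ) * m := by positivity
      have h1 : r * (1 + (N : ℝ) * m) < 1 := by
        calc r * (1 + (N : ℝ) * m) < r0 * (1 + (N : ℝ) * m) :=
              mul_lt_mul_of_pos_right hr.2 hpos
          _ = 1 := by rw [hr0]; field_simp
      rw [abs_of_pos hrpos]
      have hN0 : (0 : ℝ) ≤ (N : ℝ) := Nat.cast_nonneg N
      have hm0 : (0 : ℝ) ≤ (m : ℝ) := Nat.cast_nonneg m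
      have hNN : (N : ℝ) ≤ (N : ℝ) ^ 2 := by
        rcases Nat.eq_zero_or_pos N with hN | hN
        · simp [hN]
        · have : (1 : ℝ) ≤ (N : ℝ) := by exact_mod_cast hN
          nlinarith
      nlinarith [mul_le_mul_of_nonneg_right hNN (sq_nonneg (r * (m : ℝ))), h1,
        mul_pos hrpos hpos, sq_nonneg r, mul_nonneg hN0 hm0, hrpos]
    have hs := (innerSL ℂ (f 0)).hasSum (hx (shiftOp L f r) hball)
    rw [map_zero] at hs
    set T : Finset (FM N) :=
      (Finset.range (m + 1)).image (fun n => FreeMonoid.ofList (L.take n)) with hT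
    have hvan : ∀ σ : FM N, σ ∉ T →
        (innerSL ℂ (f 0)) (opWord (shiftOp L f r) σ (x σ)) = 0 := by
      intro σ hσ
      have hσ' : σ = FreeMonoid.ofList (FreeMonoid.toList σ) := rfl
      rw [innerSL_apply_apply, hσ', pairing L f hfo r _ 0 (Nat.zero_le _), if_neg]
      intro hpre
      rw [List.drop_zero] at hpre
      apply hσ
      rw [hT, Finset.mem_image]
      refine ⟨(FreeMonoid.toList σ).length, Finset.mem_range.2 ?_, ?_⟩
      · have := hpre.length_le; omega
      · rw [← List.prefix_iff_eq_take.1 hpre, FreeMonoid.ofList_toList]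
    have hsum0 := (hasSum_sum_of_ne_finset_zero hvan).unique hs
    rw [hT, Finset.sum_image ?hinj] at hsum0
    case hinj =>
      intro a ha b hb hab
      have ha' := Finset.mem_range.1 ha
      have hb' := Finset.mem_range.1 hb
      have : (L.take a).length = (L.take b).length := by
        have : L.take a = L.take b := congrArg FreeMonoid.toList hab
        rw [this]
      rw [List.length_take, List.length_take] at this
      omega
    rw [← hsum0]
    refine Finset.sum_congr rfl fun n hn => ?_
    have hn' := Finset.mem_range.1 hn
    rw [innerSL_apply_apply, pairing L f hfo r _ 0 (Nat.zero_le _), List.drop_zero,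
      if_pos (List.take_prefix n L)]
    rw [List.length_take]
    have : min n m = n := by omega
    rw [this, zero_add]
  -- polynomial argument
  have hPzero : (∑ n ∈ Finset.range (m + 1), Polynomial.C (c n) * Polynomial.X ^ n) = 0 := by
    apply Polynomial.eq_zero_of_infinite_isRoot
    apply Set.Infinite.mono (s := (fun t : ℝ => (t : ℂ)) '' Set.Ioo 0 r0)
    · rintro z ⟨t, ht, rfl⟩
      simp only [Set.mem_setOf_eq, Polynomial.IsRoot, Polynomial.eval_finset_sum,
        Polynomial.eval_mul, Polynomial.eval_C, Polynomial.eval_pow, Polynomial.eval_X]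
      rw [← key t ht]
      exact Finset.sum_congr rfl fun n _ => mul_comm _ _
    · exact (Set.Ioo_infinite hr0pos).image
        (fun a _ b _ hab => Complex.ofReal_injective hab)
  have hcm : c m = 0 := by
    have := congrArg (fun P => Polynomial.coeff P m) hPzero
    simpa [Polynomial.coeff_X_pow, Finset.sum_ite_eq'] using this
  rw [hc] at hcm
  simp only at hcm
  rw [hm, List.take_length] at hcm
  rwa [hfm] at hcm


/-- For an infinite-dimensional Hilbert space `E`, the set
`{E(W)* e : W ∈ B_N(E), e ∈ E}` is total in `⊕_{σ ∈ F_N^+} E`; equivalently,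
if a square-summable vector `x = (x_σ)_σ` satisfies `E(W) x = Σ_σ W_σ x_σ = 0`
for all `W` in the open operator `N`-ball, then `x = 0`. -/
theorem eval_row_injective (h : ¬ FiniteDimensional ℂ E)
    (x : lp (fun _ : FM N => E) 2)
    (hx : ∀ W : Fin N → E →L[ℂ] E, InBall W →
      HasSum (fun σ : FM N => opWord W σ (x σ)) 0) :
    x = 0 := by
  apply lp.ext
  funext σ
  simp only [lp.coeFn_zero, Pi.zero_apply]
  by_contra hne
  have hn0 : ‖x σ‖ ≠ 0 := norm_ne_zero_iff.2 hne
  set e : E := ((‖x σ‖ : ℂ))⁻¹ • x σ with hedef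
  have he : ‖e‖ = 1 := by
    rw [hedef, norm_smul, norm_inv, Complex.norm_real, Real.norm_eq_abs, abs_of_nonneg (norm_nonneg _)]
    field_simp
  have h0 := inner_apply_eq_zero h x hx σ e he
  rw [hedef, inner_smul_left, inner_self_eq_norm_sq_to_K] at h0
  simp only [map_inv₀, Complex.conj_ofReal, mul_eq_zero, inv_eq_zero,
    Complex.ofReal_eq_zero] at h0
  rcases h0 with h0 | h0
  · exact hn0 h0
  · exact hn0 (by simpa using pow_eq_zero_iff (n := 2) two_ne_zero |>.1 h0)

end NCSzego
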